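/- The evaluated generators of the triangular q-Onsager algebra satisfy the q-commutation relation [T₁, T₀]_{q⁻²} = ε₊ε₋(1 − q⁻²)·1, where T₀ = k₊·q·x^{s₁}·E·K + ε₊·K and T₁ = k₊·x^{−s₀}·E + ε₋·K⁻¹, for any nonzero x ∈ ℂ, integers s₀, s₁, and scalars k₊, ε₊, ε₋ ∈ ℂ. -/
import Mathlib


/-- The q-commutator `[X,Y]_p = XY − p·YX`. -/
def qComm {A : Type*} [Ring A] [Algebra ℂ A] (p : ℂ) (X Y : A) : A :=
  X * Y - p • (Y * X)

/-- The evaluated generators of the triangular q-Onsager algebra satisfy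
`[T₁, T₀]_{q⁻²} = ε₊ε₋(1 − q⁻²)·1`. -/
theorem triangular_qOnsager_qcomm {A : Type*} [Ring A] [Algebra ℂ A]
    (q : ℂ) (hq0 : q ≠ 0) (hq2 : q ^ 2 ≠ 1) (E F : A) (K : Aˣ)
    (hKE : (K : A) * E * (↑K⁻¹ : A) = q ^ 2 • E)
    (hKF : (K : A) * F * (↑K⁻¹ : A) = (q ^ 2)⁻¹ • F)
    (hEF : E * F - F * E = (q - q⁻¹)⁻¹ • ((K : A) - (↑K⁻¹ : A)))
    (x : ℂ) (hx : x ≠ 0) (s₀ s₁ : ℤ) (kp εp εm : ℂ) :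
    qComm (q ^ (-2 : ℤ))
        ((kp * x ^ (-s₀)) • E + εm • (↑K⁻¹ : A))
        ((kp * q * x ^ s₁) • (E * (K : A)) + εp • (K : A))
      = (εp * εm * (1 - q ^ (-2 : ℤ))) • (1 : A) := by
  have h2 : (q : ℂ) ^ 2 ≠ 0 := pow_ne_zero _ hq0
  have hKE2 : (K : A) * E = (q ^ 2) • (E * (K : A)) := by
    have h := congrArg (· * (K : A)) hKE
    simpa [mul_assoc, smul_mul_assoc] using h
  have hK'E : (↑K⁻¹ : A) * E = ((q ^ 2)⁻¹) • (E * (↑K⁻¹ : A)) := by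
    have h := congrArg (fun z => (↑K⁻¹ : A) * z) hKE
    simp only [← mul_assoc, Units.inv_mul, one_mul, mul_smul_comm] at h
    rw [h, inv_smul_smul₀ h2]
  have hA : (↑K⁻¹ : A) * (E * (K : A)) = ((q ^ 2)⁻¹) • E := by
    rw [← mul_assoc, hK'E, smul_mul_assoc, mul_assoc, Units.inv_mul, mul_one]
  have hz : (q : ℂ) ^ (-2 : ℤ) = (q ^ 2)⁻¹ := by
    rw [zpow_neg, zpow_two, sq]
  simp only [qComm, add_mul, mul_add, mul_assoc, smul_mul_assoc, mul_smul_comm,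
    Units.inv_mul, Units.mul_inv, mul_one, hA, hKE2, smul_smul, hz]
  match_scalars
  · linear_combination (-(kp * (q * x ^ s₁) * (kp * x ^ (-s₀)))) * inv_mul_cancel₀ h2
  · ring
  · linear_combination (-(εp * (kp * x ^ (-s₀)))) * inv_mul_cancel₀ h2
  · ring
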